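/- Let G = (V,E) be a finite simple 3-regular graph. Consider assignments σ : E ∪ V → {0,1} (the value σ(v) for v ∈ V is interpreted as the value of the edge joining v to a new apex vertex a adjacent to all of V). Then the number of assignments σ such that (i) for every v ∈ V, exactly one of the four values σ(e₁), σ(e₂), σ(e₃), σ(v) equals 0, where e₁, e₂, e₃ are the three edges of G incident to v, and (ii) the number of vertices v ∈ V with σ(v) = 1 is even, equals the number of matchings of G. -/

import Mathlib

open scoped Classical

private lemma ite_ff_iff (c : Prop) [Decidable c] :
    ((if c then false else true) = false) ↔ c := by
  by_cases h : c <;> simp [h]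

open scoped Classical in
/-- For a finite simple 3-regular graph `G`, the number of assignments
`σ : E ∪ V → {0,1}` (the value on a vertex `v` being the value of the edge from
`v` to a new apex vertex) such that (i) at every vertex exactly one of its four
values is `0`, and (ii) the number of vertices with `σ`-value `1` is even,
equals the number of matchings of `G`. -/
theorem apex_holant_eq_matchings {V : Type} [Fintype V] (G : SimpleGraph V)
    (hreg : G.IsRegularOfDegree 3) :
    (Finset.univ.filter fun σ : (G.edgeSet → Bool) × (V → Bool) =>
        (∀ v : V,
          (Finset.univ.filter
              fun e : G.edgeSet => v ∈ (e : Sym2 V) ∧ σ.1 e = false).card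
            + (if σ.2 v = false then 1 else 0) = 1) ∧
        Even (Finset.univ.filter fun v : V => σ.2 v = true).card).card
      = (Finset.univ.filter fun M : Finset (Sym2 V) =>
          ↑M ⊆ G.edgeSet ∧
            ∀ e ∈ M, ∀ e' ∈ M, e ≠ e' → ∀ v : V, ¬(v ∈ e ∧ v ∈ e')).card := by
  classical
  refine Finset.card_nbij'
    (i := fun σ => Finset.image (Subtype.val)
      (Finset.univ.filter fun e : G.edgeSet => σ.1 e = false))
    (j := fun M => (fun e => if (e : Sym2 V) ∈ M then false else true,
      fun v => if ∃ e ∈ M, v ∈ e then true else false)) ?_ ?_ ?_ ?_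
  · -- forward: valid σ gives a matching
    intro σ hσ
    dsimp only
    rw [Finset.mem_coe, Finset.mem_filter] at hσ ⊢
    refine ⟨Finset.mem_univ _, ?_, ?_⟩
    · intro x hx
      rw [Finset.mem_coe, Finset.mem_image] at hx
      obtain ⟨a, _, rfl⟩ := hx
      exact a.2
    · intro e he e' he' hne v hv
      rw [Finset.mem_image] at he he'
      obtain ⟨a, ha, rfl⟩ := he
      obtain ⟨a', ha', rfl⟩ := he'
      rw [Finset.mem_filter] at ha ha'
      have hane : a ≠ a' := fun h => hne (by rw [h])
      have h2 : 1 < (Finset.univ.filter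
          fun e : G.edgeSet => v ∈ (e : Sym2 V) ∧ σ.1 e = false).card := by
        rw [Finset.one_lt_card]
        exact ⟨a, Finset.mem_filter.2 ⟨Finset.mem_univ _, hv.1, ha.2⟩,
          a', Finset.mem_filter.2 ⟨Finset.mem_univ _, hv.2, ha'.2⟩, hane⟩
      have h1 := (hσ.2).1 v
      omega
  · -- backward: matching gives valid σ
    intro M hM
    dsimp only
    rw [Finset.mem_coe, Finset.mem_filter] at hM ⊢
    obtain ⟨-, hsub, hmatch⟩ := hM
    refine ⟨Finset.mem_univ _, ?_, ?_⟩
    · intro v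
      have hfe : (Finset.univ.filter fun e : G.edgeSet =>
            v ∈ (e : Sym2 V) ∧ (if (e : Sym2 V) ∈ M then false else true) = false)
          = Finset.univ.filter fun e : G.edgeSet =>
            v ∈ (e : Sym2 V) ∧ (e : Sym2 V) ∈ M := by
        apply Finset.filter_congr
        intro e _
        rw [ite_ff_iff]
      rw [hfe]
      by_cases h : ∃ e ∈ M, v ∈ e
      · obtain ⟨e₀, he₀, hv₀⟩ := h
        have hcard : (Finset.univ.filter fun e : G.edgeSet =>
            v ∈ (e : Sym2 V) ∧ (e : Sym2 V) ∈ M) = {⟨e₀, hsub he₀⟩} := by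
          apply Finset.eq_singleton_iff_unique_mem.2
          refine ⟨Finset.mem_filter.2 ⟨Finset.mem_univ _, hv₀, he₀⟩, ?_⟩
          intro x hx
          rw [Finset.mem_filter] at hx
          by_contra hxe
          have hne : (x : Sym2 V) ≠ e₀ := fun h => hxe (Subtype.ext h)
          exact hmatch (x : Sym2 V) hx.2.2 e₀ he₀ hne v ⟨hx.2.1, hv₀⟩
        have h' : ∃ e ∈ M, v ∈ e := ⟨e₀, he₀, hv₀⟩
        rw [hcard, Finset.card_singleton]
        simp [h']
      · have hcard : (Finset.univ.filter fun e : G.edgeSet =>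
            v ∈ (e : Sym2 V) ∧ (e : Sym2 V) ∈ M) = ∅ := by
          apply Finset.filter_false_of_mem
          intro e _ he
          exact h ⟨(e : Sym2 V), he.2, he.1⟩
        rw [hcard, Finset.card_empty]
        simp [h]
    · have hset : (Finset.univ.filter fun v : V =>
          (if ∃ e ∈ M, v ∈ e then true else false) = true)
          = M.biUnion (fun e => Finset.univ.filter fun v : V => v ∈ e) := by
        ext v
        simp only [Finset.mem_filter, Finset.mem_univ, true_and, Finset.mem_biUnion]
        by_cases h : ∃ e ∈ M, v ∈ e <;> simp [h]
      rw [hset]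
      rw [Finset.card_biUnion]
      · have hterm : ∀ e ∈ M, (Finset.univ.filter fun v : V => v ∈ e).card = 2 := by
          intro e he
          have hnd : ¬ e.IsDiag := G.not_isDiag_of_mem_edgeSet (hsub he)
          induction e using Sym2.ind with
          | _ a b =>
            have hab : a ≠ b := by
              intro h; exact hnd (by rw [h]; exact Sym2.mk_isDiag_iff.2 rfl)
            have : (Finset.univ.filter fun v : V => v ∈ s(a, b)) = {a, b} := by
              ext x
              simp [Sym2.mem_iff]
            rw [this, Finset.card_pair hab]
        rw [Finset.sum_congr rfl hterm, Finset.sum_const, smul_eq_mul]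
        exact ⟨M.card, by ring⟩
      · intro e he e' he' hne
        rw [Function.onFun, Finset.disjoint_left]
        intro v hv hv'
        rw [Finset.mem_filter] at hv hv'
        exact hmatch e he e' he' hne v ⟨hv.2, hv'.2⟩
  · -- left inverse
    intro σ hσ
    dsimp only
    rw [Finset.mem_coe, Finset.mem_filter] at hσ
    obtain ⟨-, hcond, -⟩ := hσ
    refine Prod.ext ?_ ?_
    · funext e
      dsimp only
      have hmem : ((e : Sym2 V) ∈ Finset.image (Subtype.val)
          (Finset.univ.filter fun a : G.edgeSet => σ.1 a = false))
          ↔ σ.1 e = false := by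
        simp only [Finset.mem_image, Finset.mem_filter, Finset.mem_univ, true_and]
        constructor
        · rintro ⟨a, ha, hae⟩
          rwa [Subtype.coe_injective hae] at ha
        · intro h; exact ⟨e, h, rfl⟩
      by_cases h : σ.1 e = false
      · rw [if_pos (hmem.2 h), h]
      · rw [if_neg (fun hc => h (hmem.1 hc))]
        simp only [Bool.not_eq_false] at h
        exact h.symm
    · funext v
      dsimp only
      have hv := hcond v
      by_cases h2 : σ.2 v = false
      · rw [if_pos h2] at hv
        have hc0 : (Finset.univ.filter
            fun e : G.edgeSet => v ∈ (e : Sym2 V) ∧ σ.1 e = false).card = 0 := by omega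
        rw [Finset.card_eq_zero] at hc0
        have hne : ¬ ∃ x ∈ Finset.image (Subtype.val)
            (Finset.univ.filter fun a : G.edgeSet => σ.1 a = false), v ∈ x := by
          rintro ⟨x, hx, hvx⟩
          rw [Finset.mem_image] at hx
          obtain ⟨a, ha, rfl⟩ := hx
          rw [Finset.mem_filter] at ha
          have : a ∈ (Finset.univ.filter
              fun e : G.edgeSet => v ∈ (e : Sym2 V) ∧ σ.1 e = false) :=
            Finset.mem_filter.2 ⟨Finset.mem_univ _, hvx, ha.2⟩
          rw [hc0] at this
          exact absurd this (Finset.notMem_empty _)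
        rw [if_neg hne, h2]
      · rw [if_neg h2] at hv
        simp only [Bool.not_eq_false] at h2
        have hc1 : (Finset.univ.filter
            fun e : G.edgeSet => v ∈ (e : Sym2 V) ∧ σ.1 e = false).card = 1 := by omega
        obtain ⟨a, ha⟩ := Finset.card_eq_one.1 hc1
        have haa : a ∈ (Finset.univ.filter
            fun e : G.edgeSet => v ∈ (e : Sym2 V) ∧ σ.1 e = false) := by
          rw [ha]; exact Finset.mem_singleton_self a
        rw [Finset.mem_filter] at haa
        have hex : ∃ x ∈ Finset.image (Subtype.val)
            (Finset.univ.filter fun a : G.edgeSet => σ.1 a = false), v ∈ x :=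
          ⟨(a : Sym2 V), Finset.mem_image.2 ⟨a,
            Finset.mem_filter.2 ⟨Finset.mem_univ _, haa.2.2⟩, rfl⟩, haa.2.1⟩
        rw [if_pos hex, h2]
  · -- right inverse
    intro M hM
    dsimp only
    rw [Finset.mem_coe, Finset.mem_filter] at hM
    obtain ⟨-, hsub, -⟩ := hM
    ext x
    simp only [Finset.mem_image, Finset.mem_filter, Finset.mem_univ, true_and]
    constructor
    · rintro ⟨a, ha, rfl⟩
      exact (ite_ff_iff _).1 ha
    · intro hx
      exact ⟨⟨x, hsub hx⟩, (ite_ff_iff _).2 hx, rfl⟩
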